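/- arXiv:1803.02475 — 8 statements merged into one kernel-verified Lean document; each statement's English description precedes it below -/
import Mathlib

section
/- If α is infinite and f : α × α → α is injective, then for sets F, G of α that are not equal, the symmetric difference of U[F] := f '' (F ×ˢ univ) and U[G] := f '' (G ×ˢ univ) is infinite. -/
lemma aux_side {α : Type*} [Infinite α] (f : α × α → α) (hf : Function.Injective f)
    (F G : Set α) (a : α) (haF : a ∈ F) (haG : a ∉ G) :
    (f '' (F ×ˢ Set.univ) \ f '' (G ×ˢ Set.univ)).Infinite := by
  have : Set.InjOn (fun b => f (a, b)) Set.univ := by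
    intro x _ y _ h
    have := hf h
    exact (Prod.mk.injEq _ _ _ _ ▸ this).2
  have hsub : (fun b => f (a, b)) '' Set.univ ⊆
      f '' (F ×ˢ Set.univ) \ f '' (G ×ˢ Set.univ) := by
    rintro _ ⟨b, -, rfl⟩
    constructor
    · exact ⟨(a, b), ⟨haF, trivial⟩, rfl⟩
    · rintro ⟨⟨x, y⟩, ⟨hx, -⟩, h⟩
      have := hf h
      have : x = a := congrArg Prod.fst this
      exact haG (this ▸ hx)
  exact Set.Infinite.mono hsub ((Set.infinite_univ).image this)

theorem stmt_1 {α : Type*} [Infinite α] (f : α × α → α) (hf : Function.Injective f)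
    (F G : Set α) (hFG : F ≠ G) :
    ((f '' (F ×ˢ Set.univ) \ f '' (G ×ˢ Set.univ)) ∪
      (f '' (G ×ˢ Set.univ) \ f '' (F ×ˢ Set.univ))).Infinite := by
  have h : ∃ a, (a ∈ F ∧ a ∉ G) ∨ (a ∈ G ∧ a ∉ F) := by
    by_contra h
    push_neg at h
    exact hFG (Set.ext fun x => by have := h x; tauto)
  rcases h with ⟨a, ⟨haF, haG⟩ | ⟨haG, haF⟩⟩
  · exact (aux_side f hf F G a haF haG).mono Set.subset_union_left
  · exact (aux_side f hf G F a haG haF).mono Set.subset_union_right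
end

section
/- Let α be infinite with an injection f : α × α → α. Define the relation N on sets of α by N F G ↔ (F \ G is finite ∧ G \ F is finite). Then the map F ↦ U[F] := f '' (F ×ˢ univ) satisfies: N (U[F]) (U[G]) ↔ F = G. -/
lemma aux_sub {α : Type*} [Infinite α] (f : α × α → α) (hf : Function.Injective f)
    (F G : Set α) (h : Set.Finite (f '' (F ×ˢ Set.univ) \ f '' (G ×ˢ Set.univ))) :
    F ⊆ G := by
  intro a ha
  by_contra hg
  have hsub : Set.range (fun x => f (a, x)) ⊆
      f '' (F ×ˢ Set.univ) \ f '' (G ×ˢ Set.univ) := by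
    rintro _ ⟨x, rfl⟩
    constructor
    · exact ⟨(a, x), ⟨ha, trivial⟩, rfl⟩
    · rintro ⟨⟨b, c⟩, ⟨hb, -⟩, heq⟩
      obtain ⟨rfl, rfl⟩ := Prod.mk.injEq .. ▸ hf heq
      exact hg hb
  have hinj : Function.Injective (fun x => f (a, x)) := by
    intro x y hxy
    exact (Prod.mk.injEq .. ▸ hf hxy).2
  exact (Set.infinite_range_of_injective hinj) (h.subset hsub)

theorem stmt_2 {α : Type*} [Infinite α] (f : α × α → α) (hf : Function.Injective f)
    (F G : Set α) :
    ((Set.Finite (f '' (F ×ˢ Set.univ) \ f '' (G ×ˢ Set.univ)) ∧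
      Set.Finite (f '' (G ×ˢ Set.univ) \ f '' (F ×ˢ Set.univ))) ↔ F = G) := by
  constructor
  · rintro ⟨h1, h2⟩
    exact le_antisymm (aux_sub f hf F G h1) (aux_sub f hf G F h2)
  · rintro rfl
    simp
end

section
/- Suppose α is a type with an injection f : α × α → α, and ν : Set α → α satisfies the Nuisance Principle: ν F = ν G ↔ (F \ G finite ∧ G \ F finite). Then α is finite. -/
theorem stmt_4 {α : Type*} (f : α × α → α) (hf : Function.Injective f)
    (ν : Set α → α)
    (hν : ∀ F G : Set α, ν F = ν G ↔ (Set.Finite (F \ G) ∧ Set.Finite (G \ F))) :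
    Finite α := by
  by_contra hfin
  have : Infinite α := not_finite_iff_infinite.mp hfin
  -- spread each set into columns
  set e : Set α → Set α := fun F => {z | ∃ x ∈ F, ∃ y, z = f (x, y)} with he
  have key : ∀ F G : Set α, Set.Finite (e F \ e G) → F ⊆ G := by
    intro F G hfin' x hxF
    by_contra hxG
    have hsub : Set.range (fun y => f (x, y)) ⊆ e F \ e G := by
      rintro z ⟨y, rfl⟩
      refine ⟨⟨x, hxF, y, rfl⟩, ?_⟩
      rintro ⟨x', hx', y', hz⟩
      have := hf hz
      have : x = x' := (Prod.mk.injEq _ _ _ _ ▸ this).1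
      exact hxG (this ▸ hx')
    have hinf : (Set.range (fun y => f (x, y))).Infinite := by
      apply Set.infinite_range_of_injective
      intro a b hab
      exact ((Prod.mk.injEq _ _ _ _ ▸ hf hab)).2
    exact hinf (hfin'.subset hsub)
  have hinj : Function.Injective (fun F => ν (e F)) := by
    intro F G h
    have := (hν (e F) (e G)).mp h
    exact le_antisymm (key F G this.1) (key G F this.2)
  exact Function.cantor_injective _ hinj
end

section
/- If α is infinite, there is no ν : Set α → α with ν F = ν G ↔ (F \ G finite ∧ G \ F finite). (NP is unsatisfiable on infinite domains, using the fact that infinite types admit a pairing bijection.) -/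
theorem stmt_5 {α : Type*} [Infinite α] :
    ¬ ∃ ν : Set α → α,
      ∀ F G : Set α, ν F = ν G ↔ (Set.Finite (F \ G) ∧ Set.Finite (G \ F)) := by
  rintro ⟨ν, hν⟩
  obtain ⟨e⟩ : Nonempty (α × α ≃ α) := by
    rw [← Cardinal.eq, Cardinal.mk_prod, Cardinal.lift_id]
    exact Cardinal.mul_eq_self (Cardinal.aleph0_le_mk α)
  set S : Set α → Set α := fun A => e '' (A ×ˢ Set.univ) with hS
  have key : ∀ A B : Set α, ∀ a ∈ A \ B, ¬ (S A \ S B).Finite := by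
    intro A B a ha hfin
    have hsub : e '' ({a} ×ˢ (Set.univ : Set α)) ⊆ S A \ S B := by
      rintro x ⟨⟨p, q⟩, ⟨hp, -⟩, rfl⟩
      simp only [Set.mem_singleton_iff] at hp
      rw [hp]
      refine ⟨⟨(a, q), ⟨ha.1, trivial⟩, rfl⟩, ?_⟩
      rintro ⟨⟨p', q'⟩, ⟨hp', -⟩, hEq⟩
      have := e.injective hEq
      rw [Prod.mk.injEq] at this
      exact ha.2 (this.1 ▸ hp')
    have hprod : ({a} ×ˢ (Set.univ : Set α)).Infinite := by
      have : ({a} ×ˢ (Set.univ : Set α)) = Set.range (Prod.mk a) := by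
        ext ⟨p, q⟩; simp [eq_comm]
      rw [this]
      exact Set.infinite_range_of_injective (fun x y h => (Prod.mk.injEq _ _ _ _).mp h |>.2)
    have : (e '' ({a} ×ˢ (Set.univ : Set α))).Infinite :=
      hprod.image (fun x _ y _ h => e.injective h)
    exact this (hfin.subset hsub)
  have hinj : Function.Injective (fun A => ν (S A)) := by
    intro A B h
    have := (hν (S A) (S B)).mp h
    ext x
    constructor
    · intro hx
      by_contra hxB
      exact key A B x ⟨hx, hxB⟩ this.1
    · intro hx
      by_contra hxA
      exact key B A x ⟨hx, hxA⟩ this.2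
  exact Function.cantor_injective _ hinj
end

section
/- If there exists ν : Set α → α satisfying Hume's Principle (ν F = ν G ↔ ∃ bijection between F and G as sets), then α is infinite. -/
theorem stmt_8 {α : Type*} (ν : Set α → α)
    (hν : ∀ F G : Set α, ν F = ν G ↔ Nonempty (F ≃ G)) :
    Infinite α := by
  by_contra h
  rw [not_infinite_iff_finite] at h
  have : Fintype α := Fintype.ofFinite α
  set n := Fintype.card α with hn
  choose s hs using fun k : Fin (n+1) =>
    Finset.exists_subset_card_eq (s := (Finset.univ : Finset α)) (n := k) (Nat.lt_succ_iff.mp k.2)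
  have hinj : Function.Injective (fun k => ν ((s k : Finset α) : Set α)) := by
    intro i j hij
    obtain ⟨e⟩ := (hν _ _).mp hij
    have h1 : Fintype.card ((s i : Finset α) : Set α) =
        Fintype.card ((s j : Finset α) : Set α) := Fintype.card_congr e
    simp only [Finset.coe_sort_coe, Fintype.card_coe] at h1
    have hi := (hs i).2
    have hj := (hs j).2
    exact Fin.ext (by rw [← hi, ← hj]; simpa using h1)
  have := Fintype.card_le_of_injective _ hinj
  simp [← hn] at this
end

section
/- Hume's Principle and the Nuisance Principle are jointly unsatisfiable: there is no type α with functions h, ν : Set α → α such that h F = h G ↔ Nonempty (F ≃ G) and ν F = ν G ↔ (F \ G finite ∧ G \ F finite). -/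
theorem stmt_9 {α : Type*} (h ν : Set α → α) :
    ¬ ((∀ F G : Set α, h F = h G ↔ Nonempty (F ≃ G)) ∧
       (∀ F G : Set α, ν F = ν G ↔ (Set.Finite (F \ G) ∧ Set.Finite (G \ F)))) := by
  rintro ⟨HP, NP⟩
  -- Step 1: α is infinite
  have hinf : Infinite α := by
    by_contra hfin
    rw [not_infinite_iff_finite] at hfin
    haveI := hfin
    haveI := Fintype.ofFinite α
    set n := Fintype.card α with hn
    -- choose sets of each cardinality i ≤ n
    have hsets : ∀ i : Fin (n + 1), ∃ S : Set α, S.ncard = (i : ℕ) := by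
      intro i
      obtain ⟨S, _, hS⟩ := Set.exists_subset_card_eq (s := (Set.univ : Set α))
        (n := i) (by simpa [Set.ncard_univ, Nat.card_eq_fintype_card] using Nat.lt_succ_iff.mp i.2)
      exact ⟨S, hS⟩
    choose S hS using hsets
    have hinj : Function.Injective fun i : Fin (n + 1) => h (S i) := by
      intro i j hij
      obtain ⟨e⟩ := (HP _ _).mp hij
      have : (S i).ncard = (S j).ncard := by
        have := Nat.card_congr e
        simpa [Nat.card_coe_set_eq] using this
      rw [hS i, hS j] at this
      exact Fin.ext this
    have := Fintype.card_le_of_injective _ hinj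
    simp at this
    omega
  -- Step 2: get an equivalence α ≃ α × ℕ
  have hcard : Nonempty (α ≃ α × ℕ) := by
    rw [← Cardinal.eq]
    symm
    rw [Cardinal.mk_prod]
    simp [Cardinal.mk_nat, Cardinal.mul_aleph0_eq (Cardinal.aleph0_le_mk α)]
  obtain ⟨e⟩ := hcard
  -- Step 3: injective map Set α → α contradicting Cantor
  have key : ∀ S T : Set α, S \ T ≠ ∅ → ¬ Set.Finite ({x | (e x).1 ∈ S} \ {x | (e x).1 ∈ T}) := by
    intro S T hne hfin
    obtain ⟨a, ha⟩ := Set.nonempty_iff_ne_empty.mpr hne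
    have hinj : Function.Injective (fun k : ℕ => e.symm (a, k)) := by
      intro x y hxy
      simpa using congrArg (fun z => (e z).2) hxy
    have hmem : ∀ k : ℕ, e.symm (a, k) ∈ ({x | (e x).1 ∈ S} \ {x | (e x).1 ∈ T}) := by
      intro k
      constructor <;> simp [ha.1, ha.2]
    exact Set.infinite_of_injective_forall_mem hinj hmem hfin
  have hinj : Function.Injective (fun S : Set α => ν {x | (e x).1 ∈ S}) := by
    intro S T hST
    obtain ⟨h1, h2⟩ := (NP _ _).mp hST
    have hS : S \ T = ∅ := by
      by_contra hne
      exact key S T hne h1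
    have hT : T \ S = ∅ := by
      by_contra hne
      exact key T S hne h2
    rw [Set.diff_eq_empty] at hS hT
    exact le_antisymm hS hT
  exact Function.cantor_injective _ hinj
end

section
/- If α is uncountable and F ≠ G are sets of α, and f : α × α → α is injective, then U[F] and U[G] have symmetric difference of cardinality at least #α; in particular they are not N-equivalent even for a 'countable' variant of N (where N F G means F \ G and G \ F are countable). -/
private lemma aux_14 {α : Type*} [Uncountable α] (f : α × α → α) (hf : Function.Injective f)
    (F G : Set α) (a : α) (haF : a ∈ F) (haG : a ∉ G) :
    ¬ (f '' (F ×ˢ Set.univ) \ f '' (G ×ˢ Set.univ)).Countable := by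
  intro hc
  have hsub : (fun x => f (a, x)) '' Set.univ ⊆
      f '' (F ×ˢ Set.univ) \ f '' (G ×ˢ Set.univ) := by
    rintro _ ⟨x, -, rfl⟩
    refine ⟨⟨(a, x), ⟨haF, trivial⟩, rfl⟩, ?_⟩
    rintro ⟨⟨g, y⟩, ⟨hg, -⟩, he⟩
    have : g = a := congrArg Prod.fst (hf he)
    exact haG (this ▸ hg)
  have : ((fun x => f (a, x)) '' Set.univ).Countable := hc.mono hsub
  have hinj : Function.Injective (fun x => f (a, x)) := fun x y h => by
    simpa using congrArg Prod.snd (hf h)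
  have h2 := this.preimage hinj
  rw [Set.preimage_image_eq _ hinj] at h2
  exact Set.not_countable_univ h2

theorem stmt_14 {α : Type*} [Uncountable α] (f : α × α → α) (hf : Function.Injective f)
    (F G : Set α) (hFG : F ≠ G) :
    ¬ ((f '' (F ×ˢ Set.univ) \ f '' (G ×ˢ Set.univ)).Countable ∧
       (f '' (G ×ˢ Set.univ) \ f '' (F ×ˢ Set.univ)).Countable) := by
  rintro ⟨h1, h2⟩
  rcases Set.not_subset.mp (fun h => hFG (Set.Subset.antisymm h (fun x hx => by
      by_contra hxF
      exact aux_14 f hf G F x hx hxF h2)) ) with ⟨a, haF, haG⟩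
  · exact aux_14 f hf F G a haF haG h1
end

section
/- Generalized nuisance result: let I be an ideal of sets on α (a collection closed under subsets and finite unions, containing ∅) such that Set.univ ∉ I, and suppose there is an injective f : α × α → α with the property that for every nonempty F, the set f '' ({a} ×ˢ univ) ∉ I for each a. Then there is no ν : Set α → α with ν F = ν G ↔ (F \ G ∈ I ∧ G \ F ∈ I). -/
theorem stmt_15 {α : Type*} (I : Set (Set α))
    (hsub : ∀ A B : Set α, A ⊆ B → B ∈ I → A ∈ I)
    (hunion : ∀ A B : Set α, A ∈ I → B ∈ I → A ∪ B ∈ I)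
    (hempty : (∅ : Set α) ∈ I)
    (huniv : (Set.univ : Set α) ∉ I)
    (f : α × α → α) (hf : Function.Injective f)
    (hrange : ∀ a : α, Set.range (fun y => f (a, y)) ∉ I) :
    ¬ ∃ ν : Set α → α, ∀ F G : Set α, ν F = ν G ↔ (F \ G ∈ I ∧ G \ F ∈ I) := by
  rintro ⟨ν, hν⟩
  -- the map X ↦ ν (f '' (X ×ˢ univ)) is injective, contradicting Cantor
  have key : ∀ X Y : Set α,
      f '' (X ×ˢ (Set.univ : Set α)) \ f '' (Y ×ˢ (Set.univ : Set α)) ∈ I → X ⊆ Y := by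
    intro X Y h x hx
    by_contra hxY
    apply hrange x
    apply hsub _ _ _ h
    rintro z ⟨y, rfl⟩
    refine ⟨⟨(x, y), ⟨hx, trivial⟩, rfl⟩, ?_⟩
    rintro ⟨⟨a, b⟩, ⟨ha, -⟩, hab⟩
    obtain ⟨h1, h2⟩ := Prod.mk.injEq .. ▸ hf hab
    exact hxY (h1 ▸ ha)
  have : Function.Injective (fun X : Set α => ν (f '' (X ×ˢ (Set.univ : Set α)))) := by
    intro X Y h
    obtain ⟨h1, h2⟩ := (hν _ _).mp h
    exact le_antisymm (key X Y h1) (key Y X h2)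
  exact Function.cantor_injective _ this
end
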